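/- Assume λ_Q < 0, Condition 7 holds, and 𝒫 ⊆ {y : ‖y‖ < 1, Ay − b ∈ 𝒦}. Let ℛ = ℝⁿ \ 𝒫, X = {(y,t) : ‖y‖ ≤ 1, Ay − b ∈ 𝒦, yᵀQy + 2gᵀy ≤ t} and X_ℛ = {(y,t) ∈ X : y ∈ ℛ}. Then conv(X_ℛ) = conv(X). -/

import Mathlib

open Matrix

theorem hollow_constraints_convex_hull {n m : ℕ} (Q : Matrix (Fin n) (Fin n) ℝ)
    (g : EuclideanSpace ℝ (Fin n)) (lamQ : ℝ)
    (A : Matrix (Fin m) (Fin n) ℝ) (b : Fin m → ℝ) (K : Set (Fin m → ℝ))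
    (hQ : Q.IsSymm)
    (hlb : ∀ y : EuclideanSpace ℝ (Fin n), lamQ * ‖y‖ ^ 2 ≤ y ⬝ᵥ Q.mulVec y)
    (hev : ∃ v : EuclideanSpace ℝ (Fin n), v ≠ 0 ∧ Q.mulVec v = lamQ • (v : Fin n → ℝ))
    (hneg : lamQ < 0)
    (hKclosed : IsClosed K) (hKconv : Convex ℝ K)
    (hKcone : ∀ x ∈ K, ∀ c : ℝ, 0 ≤ c → c • x ∈ K)
    (hcond7 : ∃ d : EuclideanSpace ℝ (Fin n), d ≠ 0 ∧
      Q.mulVec d = lamQ • (d : Fin n → ℝ) ∧ A.mulVec d ∈ K ∧ -A.mulVec d ∈ K)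
    (P : Set (EuclideanSpace ℝ (Fin n)))
    (hP : P ⊆ {y : EuclideanSpace ℝ (Fin n) | ‖y‖ < 1 ∧ A.mulVec y - b ∈ K})
    (X XR : Set (EuclideanSpace ℝ (Fin n) × ℝ))
    (hX : X = {p : EuclideanSpace ℝ (Fin n) × ℝ | ‖p.1‖ ≤ 1 ∧ A.mulVec p.1 - b ∈ K ∧
      p.1 ⬝ᵥ Q.mulVec p.1 + 2 * (g ⬝ᵥ p.1) ≤ p.2})
    (hXR : XR = {p ∈ X | p.1 ∉ P}) :
    convexHull ℝ XR = convexHull ℝ X := by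
  obtain ⟨d, hd0, hQd, hAdK, hAdK'⟩ := hcond7
  -- K is closed under addition
  have hKadd : ∀ x ∈ K, ∀ z ∈ K, x + z ∈ K := by
    intro x hx z hz
    have h1 : (1/2 : ℝ) • x + (1/2 : ℝ) • z ∈ K :=
      hKconv hx hz (by norm_num) (by norm_num) (by norm_num)
    have h2 := hKcone _ h1 2 (by norm_num)
    have : (2:ℝ) • ((1/2 : ℝ) • x + (1/2 : ℝ) • z) = x + z := by
      rw [smul_add, smul_smul, smul_smul]; norm_num
    rwa [this] at h2
  apply le_antisymm
  · exact convexHull_mono (by rw [hXR]; exact Set.sep_subset _ _)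
  · refine convexHull_min ?_ (convex_convexHull ℝ XR)
    intro p hp
    by_cases hpP : p.1 ∈ P
    swap
    · exact subset_convexHull ℝ XR (by rw [hXR]; exact ⟨hp, hpP⟩)
    rw [hX] at hp
    obtain ⟨hy1, hyK, hyq⟩ := hp
    set y := p.1 with hy_def
    set t := p.2 with ht_def
    have hylt : ‖y‖ < 1 := (hP hpP).1
    -- positivity facts about d
    have hdd : (0:ℝ) < (d : Fin n → ℝ) ⬝ᵥ (d : Fin n → ℝ) := by
      have h1 : (d : Fin n → ℝ) ⬝ᵥ d ≠ 0 :=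
        (dotProduct_self_eq_zero (v := (d : Fin n → ℝ))).ne.mpr
          (fun h => hd0 (by ext i; exact congrFun h i))
      have h2 : (0:ℝ) ≤ (d : Fin n → ℝ) ⬝ᵥ d := Finset.sum_nonneg fun i _ => mul_self_nonneg _
      exact lt_of_le_of_ne h2 (Ne.symm h1)
    have hdnorm : (0:ℝ) < ‖d‖ := norm_pos_iff.mpr hd0
    -- find intersection points with the unit sphere
    have hf : Continuous fun s : ℝ => ‖y + s • d‖ :=
      (continuous_const.add (continuous_id.smul continuous_const)).norm
    set R : ℝ := (1 + ‖y‖) / ‖d‖ with hR_def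
    have hR0 : 0 < R := div_pos (by positivity) hdnorm
    have hbig : ∀ s : ℝ, |s| = R → 1 ≤ ‖y + s • d‖ := by
      intro s hs
      have h1 : ‖s • d‖ = ‖(y + s • d) - y‖ := by congr 1; abel
      have h2 : ‖(y + s • d) - y‖ ≤ ‖y + s • d‖ + ‖y‖ := norm_sub_le _ _
      have h3 : ‖s • d‖ = R * ‖d‖ := by rw [norm_smul, Real.norm_eq_abs, hs]
      have h4 : R * ‖d‖ = 1 + ‖y‖ := by rw [hR_def]; field_simp
      have h5 : R * ‖d‖ ≤ ‖y + s • d‖ + ‖y‖ := by rw [← h3, h1]; exact h2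
      linarith
    have h0norm : ‖y + (0:ℝ) • d‖ = ‖y‖ := by rw [zero_smul, add_zero]
    have hmemp : (1:ℝ) ∈ Set.Icc (‖y + (0:ℝ) • d‖) (‖y + R • d‖) := by
      constructor
      · rw [h0norm]; exact hylt.le
      · exact hbig R (abs_of_pos hR0)
    obtain ⟨sp, hspIcc, hsp⟩ := intermediate_value_Icc hR0.le hf.continuousOn hmemp
    have hmemm : (1:ℝ) ∈ Set.Icc (‖y + (0:ℝ) • d‖) (‖y + (-R) • d‖) := by
      constructor
      · rw [h0norm]; exact hylt.le
      · exact hbig (-R) (by rw [abs_neg, abs_of_pos hR0])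
    obtain ⟨sm, hsmIcc, hsm⟩ :=
      intermediate_value_Icc' (by linarith : -R ≤ (0:ℝ)) hf.continuousOn hmemm
    -- strict signs
    have hsp0 : 0 < sp := by
      rcases lt_or_eq_of_le hspIcc.1 with h | h
      · exact h
      · exfalso
        rw [← h] at hsp
        have : ‖y + (0:ℝ) • d‖ = 1 := hsp
        rw [h0norm] at this; linarith
    have hsm0 : sm < 0 := by
      rcases lt_or_eq_of_le hsmIcc.2 with h | h
      · exact h
      · exfalso
        rw [h] at hsm
        have : ‖y + (0:ℝ) • d‖ = 1 := hsm
        rw [h0norm] at this; linarith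
    have hden : 0 < sp - sm := by linarith
    set θp : ℝ := -sm / (sp - sm) with hθp_def
    set θm : ℝ := sp / (sp - sm) with hθm_def
    have hθp0 : 0 ≤ θp := div_nonneg (by linarith) hden.le
    have hθm0 : 0 ≤ θm := div_nonneg hsp0.le hden.le
    have hθsum : θp + θm = 1 := by rw [hθp_def, hθm_def]; field_simp; ring
    have hθs : θp * sp + θm * sm = 0 := by rw [hθp_def, hθm_def]; field_simp; ring
    -- constraint membership along the line
    have hlineK : ∀ s : ℝ, A.mulVec ((y + s • d : EuclideanSpace ℝ (Fin n)) : Fin n → ℝ) - b ∈ K := by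
      intro s
      have heq : A.mulVec ((y + s • d : EuclideanSpace ℝ (Fin n)) : Fin n → ℝ) - b
          = (A.mulVec y - b) + s • A.mulVec d := by
        rw [show ((y + s • d : EuclideanSpace ℝ (Fin n)) : Fin n → ℝ) = (y : Fin n → ℝ) + s • (d : Fin n → ℝ) from rfl,
          Matrix.mulVec_add, Matrix.mulVec_smul]; abel
      rw [heq]
      rcases le_or_gt 0 s with hs | hs
      · exact hKadd _ hyK _ (hKcone _ hAdK s hs)
      · have : s • A.mulVec (d : Fin n → ℝ) = (-s) • (-A.mulVec d) := by
          rw [smul_neg, neg_smul, neg_neg]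
        rw [this]
        exact hKadd _ hyK _ (hKcone _ hAdK' (-s) (by linarith))
    -- quadratic expansion along the line
    have hsymm : ∀ v : Fin n → ℝ, (d : Fin n → ℝ) ⬝ᵥ Q.mulVec v = lamQ * ((d : Fin n → ℝ) ⬝ᵥ v) := by
      intro v
      rw [Matrix.dotProduct_mulVec, ← Matrix.mulVec_transpose, hQ.eq, hQd,
        smul_dotProduct, smul_eq_mul]
    have hvQd : ∀ v : Fin n → ℝ, v ⬝ᵥ Q.mulVec (d : Fin n → ℝ) = lamQ * ((d : Fin n → ℝ) ⬝ᵥ v) := by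
      intro v
      rw [hQd, dotProduct_smul, smul_eq_mul, dotProduct_comm]
    set base : ℝ := (y : Fin n → ℝ) ⬝ᵥ Q.mulVec y + 2 * ((g : Fin n → ℝ) ⬝ᵥ y) with hbase_def
    set c1 : ℝ := 2 * (lamQ * ((d : Fin n → ℝ) ⬝ᵥ y) + (g : Fin n → ℝ) ⬝ᵥ d) with hc1_def
    set c2 : ℝ := lamQ * ((d : Fin n → ℝ) ⬝ᵥ d) with hc2_def
    have hc2neg : c2 < 0 := mul_neg_of_neg_of_pos hneg hdd
    have hexp : ∀ s : ℝ,
        ((y + s • d : EuclideanSpace ℝ (Fin n)) : Fin n → ℝ) ⬝ᵥ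
            Q.mulVec ((y + s • d : EuclideanSpace ℝ (Fin n)) : Fin n → ℝ)
          + 2 * ((g : Fin n → ℝ) ⬝ᵥ ((y + s • d : EuclideanSpace ℝ (Fin n)) : Fin n → ℝ))
        = base + s * c1 + s ^ 2 * c2 := by
      intro s
      have : ((y + s • d : EuclideanSpace ℝ (Fin n)) : Fin n → ℝ)
          = (y : Fin n → ℝ) + s • (d : Fin n → ℝ) := rfl
      rw [this, Matrix.mulVec_add, Matrix.mulVec_smul, dotProduct_add,
        add_dotProduct, add_dotProduct, dotProduct_add,
        smul_dotProduct, smul_dotProduct, dotProduct_smul,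
        dotProduct_smul, dotProduct_smul]
      simp only [smul_eq_mul]
      rw [hsymm, hvQd, hvQd]
      rw [hbase_def, hc1_def, hc2_def, dotProduct_comm (g : Fin n → ℝ) (d : Fin n → ℝ)]
      ring
    -- choose the two endpoints in XR
    have hcomb : θp * (base + sp * c1 + sp ^ 2 * c2) + θm * (base + sm * c1 + sm ^ 2 * c2) ≤ base := by
      have h1 : θp * (base + sp * c1 + sp ^ 2 * c2) + θm * (base + sm * c1 + sm ^ 2 * c2)
          = (θp + θm) * base + (θp * sp + θm * sm) * c1 + (θp * sp ^ 2 + θm * sm ^ 2) * c2 := by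
        ring
      rw [h1, hθsum, hθs]
      have h2 : 0 ≤ θp * sp ^ 2 + θm * sm ^ 2 := by positivity
      nlinarith
    set δ : ℝ := t - (θp * (base + sp * c1 + sp ^ 2 * c2) + θm * (base + sm * c1 + sm ^ 2 * c2))
      with hδ_def
    have hδ0 : 0 ≤ δ := by
      have : base ≤ t := hyq
      simp only [hδ_def]; linarith
    set pp : EuclideanSpace ℝ (Fin n) × ℝ := (y + sp • d, base + sp * c1 + sp ^ 2 * c2 + δ)
      with hpp_def
    set pm : EuclideanSpace ℝ (Fin n) × ℝ := (y + sm • d, base + sm * c1 + sm ^ 2 * c2 + δ)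
      with hpm_def
    have hnotP : ∀ s : ℝ, ‖y + s • d‖ = 1 → (y + s • d) ∉ P := by
      intro s hs hmem
      have := (hP hmem).1
      rw [hs] at this; exact lt_irrefl 1 this
    have hppXR : pp ∈ XR := by
      rw [hXR, hX]
      refine ⟨⟨hsp.le, hlineK sp, ?_⟩, hnotP sp hsp⟩
      rw [hexp sp]; show _ ≤ base + sp * c1 + sp ^ 2 * c2 + δ; linarith
    have hpmXR : pm ∈ XR := by
      rw [hXR, hX]
      refine ⟨⟨hsm.le, hlineK sm, ?_⟩, hnotP sm hsm⟩
      rw [hexp sm]; show _ ≤ base + sm * c1 + sm ^ 2 * c2 + δ; linarith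
    have hmem := (convex_convexHull ℝ XR) (subset_convexHull ℝ XR hppXR)
      (subset_convexHull ℝ XR hpmXR) hθp0 hθm0 hθsum
    have hpeq : θp • pp + θm • pm = p := by
      have h1 : θp • pp.1 + θm • pm.1 = y := by
        simp only [hpp_def, hpm_def, smul_add, smul_smul]
        have : θp • y + θm • y = y := by
          rw [← add_smul, hθsum, one_smul]
        rw [add_add_add_comm, this, ← add_smul]
        rw [show θp * sp + θm * sm = 0 from hθs, zero_smul, add_zero]
      have h2 : θp • pp.2 + θm • pm.2 = t := by
        simp only [hpp_def, hpm_def, smul_eq_mul]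
        have : θp * (base + sp * c1 + sp ^ 2 * c2 + δ) + θm * (base + sm * c1 + sm ^ 2 * c2 + δ)
            = (θp * (base + sp * c1 + sp ^ 2 * c2) + θm * (base + sm * c1 + sm ^ 2 * c2))
              + (θp + θm) * δ := by ring
        rw [this, hθsum, one_mul, hδ_def]; ring
      have : (θp • pp + θm • pm).1 = p.1 := h1
      have h2' : (θp • pp + θm • pm).2 = p.2 := h2
      exact Prod.ext this h2'
    rw [← hpeq]
    exact hmem
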